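/- arXiv:2310.14725 — 3 statements merged into one kernel-verified Lean document; each statement's English description precedes it below -/
import Mathlib

section
/- Let A = (α, μ, β) be a P-finite automaton of dimension n over Σ and let W ⊆ Σ* be a finite set of words with ε ∈ W. Suppose that for every σ ∈ Σ and u ∈ W, B_A(σu) lies in the ℚ[x]-submodule span_{ℚ[x]}{B_A(u') : u' ∈ W}. Then for every word w ∈ Σ*, B_A(w) ∈ span_{ℚ[x]}{B_A(u) : u ∈ W}; in particular, span_{ℚ[x]}{B_A(u) : u ∈ W} equals the backward module of A. -/
open Polynomial Matrix

/-- Substitute `x + k` for `x` in a polynomial. -/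
noncomputable def shiftP (k : ℕ) (p : Polynomial ℚ) : Polynomial ℚ :=
  p.comp (Polynomial.X + Polynomial.C (k : ℚ))

/-- The extension of the transition map `μ` of a P-finite automaton to words:
`μ(σ₁⋯σₖ)(x) = μ(σ₁)(x)·μ(σ₂)(x+1)⋯μ(σₖ)(x+k-1)`, so that
`μ(ε)(x) = I` and `μ(wσ)(x) = μ(w)(x)·μ(σ)(x+|w|)`. -/
noncomputable def muWord {S ι : Type*} [Fintype ι] [DecidableEq ι]
    (μ : S → Matrix ι ι (Polynomial ℚ)) (w : List S) : Matrix ι ι (Polynomial ℚ) :=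
  (w.zipIdx.map (fun p => (μ p.1).map (shiftP p.2))).prod

/-- The function computed by the P-finite automaton `(α, μ, β)`:
`f_A(w) = α·μ(w,1)·β(|w|+1)`. -/
noncomputable def fAut {S ι : Type*} [Fintype ι] [DecidableEq ι]
    (α : ι → ℚ) (μ : S → Matrix ι ι (Polynomial ℚ)) (β : ι → Polynomial ℚ)
    (w : List S) : ℚ :=
  α ⬝ᵥ ((muWord μ w).map (Polynomial.eval (1 : ℚ))).mulVec
      (fun i => (β i).eval ((w.length : ℚ) + 1))

/-- The backward function of a P-finite automaton: `B_A(u)(x) = μ(u)(x)·β(x+|u|)`. -/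
noncomputable def backF {S ι : Type*} [Fintype ι] [DecidableEq ι]
    (μ : S → Matrix ι ι (Polynomial ℚ)) (β : ι → Polynomial ℚ)
    (w : List S) : ι → Polynomial ℚ :=
  (muWord μ w).mulVec (fun i => shiftP w.length (β i))



noncomputable def phi1 : Polynomial ℚ →+* Polynomial ℚ :=
  (Polynomial.aeval (Polynomial.X + Polynomial.C (1 : ℚ)) : Polynomial ℚ →ₐ[ℚ] Polynomial ℚ).toRingHom

lemma phi1_apply (p : Polynomial ℚ) : phi1 p = p.comp (Polynomial.X + Polynomial.C (1 : ℚ)) := by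
  simp [phi1, aeval_def, eval₂_eq_eval_map, Polynomial.comp]

lemma shiftP_zero (p : Polynomial ℚ) : shiftP 0 p = p := by
  simp [shiftP]

lemma shiftP_succ (k : ℕ) (p : Polynomial ℚ) : shiftP (k + 1) p = phi1 (shiftP k p) := by
  rw [phi1_apply, shiftP, shiftP, Polynomial.comp_assoc]
  congr 1
  simp [add_comp]
  ring

lemma enumFrom_prod_shift {S : Type*} {n : ℕ} (μ : S → Matrix (Fin n) (Fin n) (Polynomial ℚ)) :
    ∀ (w : List S) (k : ℕ),
      ((w.zipIdx (k+1)).map (fun p => (μ p.1).map (shiftP p.2))).prod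
        = (((w.zipIdx k).map (fun p => (μ p.1).map (shiftP p.2))).prod).map phi1 := by
  intro w
  induction w with
  | nil => intro k; simp [Matrix.map_one phi1 (map_zero _) (map_one _)]
  | cons σ w ih =>
      intro k
      simp only [List.zipIdx_cons, List.map_cons, List.prod_cons, ih (k+1)]
      rw [Matrix.map_mul]
      congr 1
      ext i j
      simp [Matrix.map_apply, shiftP_succ]

lemma muWord_cons {S : Type*} {n : ℕ} (μ : S → Matrix (Fin n) (Fin n) (Polynomial ℚ))
    (σ : S) (w : List S) :
    muWord μ (σ :: w) = μ σ * (muWord μ w).map phi1 := by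
  show ((List.zipIdx (σ :: w)).map _).prod = _
  rw [List.zipIdx_cons, List.map_cons, List.prod_cons, enumFrom_prod_shift μ w 0]
  congr 1
  · ext i j; simp [Matrix.map_apply, shiftP_zero]

lemma mapMulVec {n : ℕ} (M : Matrix (Fin n) (Fin n) (Polynomial ℚ)) (v : Fin n → Polynomial ℚ) :
    (M.map phi1).mulVec (fun i => phi1 (v i)) = fun i => phi1 (M.mulVec v i) := by
  ext i
  simp [Matrix.mulVec, dotProduct, Matrix.map_apply, map_sum]

lemma backF_cons {S : Type*} {n : ℕ} (μ : S → Matrix (Fin n) (Fin n) (Polynomial ℚ))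
    (β : Fin n → Polynomial ℚ) (σ : S) (w : List S) :
    backF μ β (σ :: w) = (μ σ).mulVec (fun i => phi1 (backF μ β w i)) := by
  unfold backF
  rw [muWord_cons, ← Matrix.mulVec_mulVec, ← mapMulVec]
  ext i
  simp [List.length_cons, shiftP_succ]


/-- Let `W` be a finite set of words containing `ε`.  If for every
letter `σ` and every `u ∈ W` the vector `B_A(σu)` lies in the `ℚ[x]`-submodule spanned
by `{B_A(u') : u' ∈ W}`, then every `B_A(w)` lies in that submodule; in particular that
submodule equals the backward module of `A`. -/
theorem backward_vectors_in_polynomial_span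
    {S : Type*} [Fintype S] (n : ℕ)
    (α : Fin n → ℚ) (μ : S → Matrix (Fin n) (Fin n) (Polynomial ℚ))
    (β : Fin n → Polynomial ℚ)
    (W : Finset (List S)) (hW : ([] : List S) ∈ W)
    (hclosed : ∀ (σ : S), ∀ u ∈ W,
      backF μ β (σ :: u) ∈
        Submodule.span (Polynomial ℚ) (backF μ β '' (W : Set (List S)))) :
    (∀ w : List S,
      backF μ β w ∈
        Submodule.span (Polynomial ℚ) (backF μ β '' (W : Set (List S)))) ∧
    Submodule.span (Polynomial ℚ) (backF μ β '' (W : Set (List S)))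
      = Submodule.span (Polynomial ℚ) (Set.range (backF μ β)) := by
  set s : Set (Fin n → Polynomial ℚ) := backF μ β '' (W : Set (List S)) with hs
  have hspan : ∀ w : List S, backF μ β w ∈ Submodule.span (Polynomial ℚ) s := by
    intro w
    induction w with
    | nil => exact Submodule.subset_span ⟨[], hW, rfl⟩
    | cons σ w ih =>
        have key : ∀ v ∈ Submodule.span (Polynomial ℚ) s,
            (μ σ).mulVec (fun i => phi1 (v i)) ∈ Submodule.span (Polynomial ℚ) s := by
          intro v hv
          induction hv using Submodule.span_induction with
          | mem v hv =>
              obtain ⟨u, hu, rfl⟩ := hv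
              rw [← backF_cons]
              exact hclosed σ u hu
          | zero =>
              have : (fun i => phi1 ((0 : Fin n → Polynomial ℚ) i)) = 0 := by
                ext i; simp
              rw [this, Matrix.mulVec_zero]
              exact Submodule.zero_mem _
          | add a b _ _ ha hb =>
              have : (fun i => phi1 ((a + b) i))
                  = (fun i => phi1 (a i)) + (fun i => phi1 (b i)) := by
                ext i; simp
              rw [this, Matrix.mulVec_add]
              exact Submodule.add_mem _ ha hb
          | smul p v _ hv =>
              have : (fun i => phi1 ((p • v) i)) = phi1 p • (fun i => phi1 (v i)) := by
                ext i; simp [Polynomial.smul_eq_C_mul]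
              rw [this, Matrix.mulVec_smul]
              exact Submodule.smul_mem _ _ hv
        rw [backF_cons]
        exact key _ ih
  refine ⟨hspan, le_antisymm (Submodule.span_mono (Set.image_subset_range _ _)) ?_⟩
  rw [Submodule.span_le]
  rintro _ ⟨w, rfl⟩
  exact hspan w
end

section
/- Let f : Σ* → ℚ, let d ∈ ℕ, and let R and C be sequences of words such that A(R,C,d) has full row rank. Let A_H = (α, μ, β) be an automaton associated to the d-closed table H(R,C). Let u ∈ Σ* and σ ∈ Σ be such that A_H is correct on u but not correct on uσ, and let c_j be the j-th word of C such that f(uσc_j) ≠ α·μ(uσ,1)·e_j. Set R' := R·[u] and C' := C·[σc_j]. Then for every d' > d, the matrix A(R',C',d') has full row rank. -/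
open Polynomial Matrix

/-- The row of the table `H(R,C)` associated to a word `w`:
`row_C(w) = (f(w c₁), …, f(w cₙ))`. -/
noncomputable def tableRow {S : Type*} (f : List S → ℚ) {n : ℕ} (C : Fin n → List S)
    (w : List S) : Fin n → ℚ := fun j => f (w ++ C j)

/-- The matrix `A(R,C,d) = [Δ⁰H(R,C) | Δ¹H(R,C) | ⋯ | ΔᵈH(R,C)]`, an
`m × (d+1)n` matrix with columns indexed by `Fin (d+1) × Fin n`, where
`Δ = diag(|r₁|+1, …, |rₘ|+1)` and `H(R,C)ᵢⱼ = f(rᵢcⱼ)`. -/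
noncomputable def tableA {S : Type*} (f : List S → ℚ) {m n : ℕ}
    (R : Fin m → List S) (C : Fin n → List S) (d : ℕ) :
    Matrix (Fin m) (Fin (d + 1) × Fin n) ℚ :=
  fun i p => ((R i).length + 1 : ℚ) ^ (p.1 : ℕ) * f (R i ++ C p.2)

lemma muWord_append_singleton {S ι : Type*} [Fintype ι] [DecidableEq ι]
    (μ : S → Matrix ι ι (Polynomial ℚ)) (w : List S) (σ : S) :
    muWord μ (w ++ [σ]) = muWord μ w * (μ σ).map (shiftP w.length) := by
  simp [muWord, List.zipIdx_append]

lemma map_shiftP_eval {ι : Type*} (L : ℕ) (M : Matrix ι ι (Polynomial ℚ)) :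
    (M.map (shiftP L)).map (Polynomial.eval (1 : ℚ)) = M.map (Polynomial.eval ((L : ℚ) + 1)) := by
  ext i k
  simp [shiftP, Polynomial.eval_comp, add_comm]

lemma map_eval_mul {ι : Type*} [Fintype ι] [DecidableEq ι] (x : ℚ)
    (M N : Matrix ι ι (Polynomial ℚ)) :
    ((M * N).map (Polynomial.eval x)) = M.map (Polynomial.eval x) * N.map (Polynomial.eval x) := by
  have : (Polynomial.eval x : Polynomial ℚ → ℚ) = (Polynomial.evalRingHom x : Polynomial ℚ → ℚ) := rfl
  rw [this, Matrix.map_mul]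

/-- Let `A(R,C,d)` have full row rank and let `A_H = (α, μ, β)` be
an automaton associated to the `d`-closed table `H(R,C)`.  If `A_H` is correct on `u`
but not on `uσ`, and `c_j` is a column word with `f(uσc_j) ≠ α·μ(uσ,1)·e_j`, then for
`R' = R·[u]` and `C' = C·[σc_j]` the matrix `A(R',C',d')` has full row rank `m+1` for
every `d' > d`. -/
theorem extended_table_full_row_rank
    {S : Type*} [Fintype S] (f : List S → ℚ) (m n d : ℕ)
    (hm : 0 < m) (hn : 0 < n)
    (R : Fin m → List S) (C : Fin n → List S)
    (hrank : (tableA f R C d).rank = m)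
    (α : Fin n → ℚ) (μ : S → Matrix (Fin n) (Fin n) (Polynomial ℚ))
    (β : Fin n → Polynomial ℚ)
    (hα : α = tableRow f C (R ⟨0, hm⟩))
    (hβ : β = Pi.single (⟨0, hn⟩ : Fin n) (1 : Polynomial ℚ))
    (hμdeg : ∀ (σ : S) (i j : Fin n), ((μ σ) i j).natDegree ≤ d)
    (hμclosed : ∀ (σ : S) (i : Fin m),
      Matrix.vecMul (tableRow f C (R i))
          ((μ σ).map (Polynomial.eval (((R i).length : ℚ) + 1)))
        = tableRow f C (R i ++ [σ]))
    (u : List S) (σ : S)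
    (hu : Matrix.vecMul α ((muWord μ u).map (Polynomial.eval (1 : ℚ)))
        = tableRow f C u)
    (huσ : Matrix.vecMul α ((muWord μ (u ++ [σ])).map (Polynomial.eval (1 : ℚ)))
        ≠ tableRow f C (u ++ [σ]))
    (j : Fin n)
    (hj : f ((u ++ [σ]) ++ C j)
        ≠ Matrix.vecMul α ((muWord μ (u ++ [σ])).map (Polynomial.eval (1 : ℚ))) j) :
    ∀ d' : ℕ, d < d' →
      (tableA f (Fin.snoc R u : Fin (m + 1) → List S)
          (Fin.snoc C (σ :: C j) : Fin (n + 1) → List S) d').rank = m + 1 := by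
  intro d' hd'
  -- notation
  set A' := tableA f (Fin.snoc R u : Fin (m + 1) → List S)
      (Fin.snoc C (σ :: C j) : Fin (n + 1) → List S) d' with hA'
  -- rows of the small table are linearly independent
  have hLI : LinearIndependent ℚ (fun i => tableA f R C d i) := by
    rw [linearIndependent_iff_card_eq_finrank_span]
    rw [Set.finrank, show (fun i => tableA f R C d i) = (tableA f R C d).row from rfl, ← Matrix.rank_eq_finrank_span_row, hrank, Fintype.card_fin]
  suffices h : LinearIndependent ℚ (fun i => A' i) by
    have := h.rank_matrix (M := A')
    simpa using this
  rw [Fintype.linearIndependent_iff]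
  intro g hg
  have hgp : ∀ p, ∑ i, g i * A' i p = 0 := by
    intro p
    have := congrFun hg p
    simpa [Finset.sum_apply] using this
  -- (a) : old columns
  have ha : ∀ (k : Fin (d' + 1)) (q : Fin n),
      ∑ i : Fin m, g i.castSucc * (((R i).length + 1 : ℚ) ^ (k : ℕ) * f (R i ++ C q))
        + g (Fin.last m) * ((u.length + 1 : ℚ) ^ (k : ℕ) * f (u ++ C q)) = 0 := by
    intro k q
    have := hgp (k, q.castSucc)
    rw [Fin.sum_univ_castSucc] at this
    simpa [hA', tableA, Fin.snoc_castSucc, Fin.snoc_last] using this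
  -- (b) : new column
  have hb : ∑ i : Fin m, g i.castSucc * f (R i ++ (σ :: C j))
      + g (Fin.last m) * f (u ++ (σ :: C j)) = 0 := by
    have := hgp ((0 : Fin (d' + 1)), Fin.last n)
    rw [Fin.sum_univ_castSucc] at this
    simpa [hA', tableA, Fin.snoc_castSucc, Fin.snoc_last] using this
  -- closedness identity per row
  have hrow : ∀ i : Fin m, f ((R i ++ [σ]) ++ C j)
      = ∑ k, f (R i ++ C k) * ((μ σ) k j).eval (((R i).length : ℚ) + 1) := by
    intro i
    have := congrFun (hμclosed σ i) j
    simp only [Matrix.vecMul, dotProduct, tableRow, Matrix.map_apply] at this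
    exact this.symm
  -- value of the automaton on uσ at column j
  have hB : Matrix.vecMul α ((muWord μ (u ++ [σ])).map (Polynomial.eval (1 : ℚ))) j
      = ∑ k, f (u ++ C k) * ((μ σ) k j).eval ((u.length : ℚ) + 1) := by
    rw [muWord_append_singleton, map_eval_mul, ← Matrix.vecMul_vecMul, hu, map_shiftP_eval]
    simp [Matrix.vecMul, dotProduct, tableRow]
  -- coefficient expansion
  have hev : ∀ (t : ℚ) (k : Fin n), ((μ σ) k j).eval t
      = ∑ p ∈ Finset.range (d + 1), ((μ σ) k j).coeff p * t ^ p := by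
    intro t k
    exact Polynomial.eval_eq_sum_range' (Nat.lt_succ_of_le (hμdeg σ k j)) t
  -- inner sums from (a)
  have hin : ∀ (p : ℕ), p < d + 1 → ∀ (k : Fin n),
      ∑ i : Fin m, g i.castSucc * (((R i).length + 1 : ℚ) ^ p * f (R i ++ C k))
        = -(g (Fin.last m) * ((u.length + 1 : ℚ) ^ p * f (u ++ C k))) := by
    intro p hp k
    have := ha ⟨p, by omega⟩ k
    linarith
  -- key computation
  have key : ∑ i : Fin m, g i.castSucc * f (R i ++ (σ :: C j))
      = -(g (Fin.last m) * ∑ k, f (u ++ C k) * ((μ σ) k j).eval ((u.length : ℚ) + 1)) := by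
    have lhs1 : ∑ i : Fin m, g i.castSucc * f (R i ++ (σ :: C j))
        = ∑ i : Fin m, ∑ k, ∑ p ∈ Finset.range (d + 1),
            ((μ σ) k j).coeff p *
              (g i.castSucc * (((R i).length + 1 : ℚ) ^ p * f (R i ++ C k))) := by
      refine Finset.sum_congr rfl fun i _ => ?_
      have : R i ++ (σ :: C j) = (R i ++ [σ]) ++ C j := by simp
      rw [this, hrow i, Finset.mul_sum]
      refine Finset.sum_congr rfl fun k _ => ?_
      rw [hev, Finset.mul_sum, Finset.mul_sum]
      exact Finset.sum_congr rfl fun p _ => by ring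
    rw [lhs1, Finset.sum_comm]
    have : ∀ k : Fin n, ∑ i : Fin m, ∑ p ∈ Finset.range (d + 1),
        ((μ σ) k j).coeff p *
          (g i.castSucc * (((R i).length + 1 : ℚ) ^ p * f (R i ++ C k)))
        = -(g (Fin.last m) * (f (u ++ C k) * ((μ σ) k j).eval ((u.length : ℚ) + 1))) := by
      intro k
      rw [Finset.sum_comm]
      have : ∀ p ∈ Finset.range (d + 1),
          ∑ i : Fin m, ((μ σ) k j).coeff p *
            (g i.castSucc * (((R i).length + 1 : ℚ) ^ p * f (R i ++ C k)))
          = ((μ σ) k j).coeff p *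
              -(g (Fin.last m) * ((u.length + 1 : ℚ) ^ p * f (u ++ C k))) := by
        intro p hp
        rw [← Finset.mul_sum, hin p (Finset.mem_range.mp hp) k]
      rw [Finset.sum_congr rfl this, hev]
      rw [Finset.mul_sum, Finset.mul_sum, ← Finset.sum_neg_distrib]
      exact Finset.sum_congr rfl fun p _ => by ring
    rw [Finset.sum_congr rfl fun k _ => this k, Finset.sum_neg_distrib, Finset.mul_sum]
  -- last coefficient vanishes
  have hlast : g (Fin.last m) = 0 := by
    have hAB : f (u ++ (σ :: C j))
        ≠ ∑ k, f (u ++ C k) * ((μ σ) k j).eval ((u.length : ℚ) + 1) := by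
      rw [← hB]
      have : (u ++ [σ]) ++ C j = u ++ (σ :: C j) := by simp
      rw [← this]
      exact hj
    by_contra hL
    apply hAB
    have h1 : g (Fin.last m) * f (u ++ (σ :: C j))
        = g (Fin.last m) * ∑ k, f (u ++ C k) * ((μ σ) k j).eval ((u.length : ℚ) + 1) := by
      have := hb
      rw [key] at this
      linarith
    exact mul_left_cancel₀ hL h1
  -- remaining coefficients vanish by independence of the small table
  have hsmall : ∀ i : Fin m, g i.castSucc = 0 := by
    have hz : ∑ i : Fin m, (g i.castSucc) • tableA f R C d i = 0 := by
      funext p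
      rw [Finset.sum_apply]
      have := ha ⟨(p.1 : ℕ), by omega⟩ p.2
      rw [hlast] at this
      simpa [tableA, smul_eq_mul] using this
    exact Fintype.linearIndependent_iff.mp hLI _ hz
  intro i
  refine Fin.lastCases ?_ ?_ i
  · exact hlast
  · exact hsmall
end

section
/- Let A = (α, μ, β) be a P-finite automaton of dimension n over Σ computing f = f_A. Let R and C be sequences of words and let d, s ∈ ℕ be such that the matrix A(R,C,d) (built from f) has full row rank and |r| < s for every word r ∈ R. Then the vectors f̄^s_A(r), for r ∈ R, are linearly independent over ℚ; that is, the ℚ-vector space span_ℚ{f̄^s_A(r) : r ∈ R} ⊆ ℚ^{1×(s+1)n} has dimension |R|. -/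
open Polynomial Matrix

/-- The `s`-bounded forward vector of a P-finite automaton:
`f̄ˢ_A(u) = (0_{1×|u|n}, α·μ(u,1), 0_{1×(s−|u|)n}) ∈ ℚ^{1×(s+1)n}`, encoded as a
function on `Fin (s+1) × ι` whose block at position `|u|` is `α·μ(u,1)`. -/
noncomputable def fwdBounded {S ι : Type*} [Fintype ι] [DecidableEq ι]
    (α : ι → ℚ) (μ : S → Matrix ι ι (Polynomial ℚ)) (s : ℕ) (u : List S) :
    Fin (s + 1) × ι → ℚ :=
  fun p =>
    if (p.1 : ℕ) = u.length then
      Matrix.vecMul α ((muWord μ u).map (Polynomial.eval (1 : ℚ))) p.2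
    else 0




/-- `shiftP k` as a ring hom. -/
noncomputable def shiftRH (k : ℕ) : Polynomial ℚ →+* Polynomial ℚ :=
  (Polynomial.aeval (X + C (k : ℚ)) : Polynomial ℚ →ₐ[ℚ] Polynomial ℚ).toRingHom

lemma shiftRH_apply (k : ℕ) (p : Polynomial ℚ) : shiftRH k p = shiftP k p := by
  simp [shiftRH, shiftP, Polynomial.aeval_def, Polynomial.comp]

lemma shiftP_shiftP (a b : ℕ) (p : Polynomial ℚ) :
    shiftP a (shiftP b p) = shiftP (b + a) p := by
  simp only [shiftP, Polynomial.comp_assoc]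
  congr 1
  push_cast
  ring_nf
  simp [Polynomial.X_comp, Polynomial.add_comp, Polynomial.C_comp]
  ring

lemma eval_shiftP (k : ℕ) (x : ℚ) (p : Polynomial ℚ) :
    (shiftP k p).eval x = p.eval (x + k) := by
  simp [shiftP, Polynomial.eval_comp]



section MuWord
variable {S ι : Type*} [Fintype ι] [DecidableEq ι] (μ : S → Matrix ι ι (Polynomial ℚ))

/-- Auxiliary: product over `enumFrom n`. -/
noncomputable def muFrom (n : ℕ) (w : List S) : Matrix ι ι (Polynomial ℚ) :=
  ((w.zipIdx n).map (fun p => (μ p.1).map (shiftP p.2))).prod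

lemma muWord_eq_muFrom (w : List S) : muWord μ w = muFrom μ 0 w := by
  simp [muWord, muFrom]

lemma muFrom_nil (n : ℕ) : muFrom μ n ([] : List S) = 1 := rfl

lemma muFrom_cons (n : ℕ) (a : S) (w : List S) :
    muFrom μ n (a :: w) = (μ a).map (shiftP n) * muFrom μ (n + 1) w := by
  simp [muFrom, List.zipIdx_cons]

lemma matMap_shift (k : ℕ) (M N : Matrix ι ι (Polynomial ℚ)) :
    (M * N).map (shiftP k) = M.map (shiftP k) * N.map (shiftP k) := by
  have : ∀ P : Matrix ι ι (Polynomial ℚ), P.map (shiftP k) = P.map (shiftRH k) := by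
    intro P; ext i j; simp [shiftRH_apply]
  rw [this, this, this, Matrix.map_mul]

lemma muFrom_shift (w : List S) : ∀ n : ℕ, muFrom μ n w = (muFrom μ 0 w).map (shiftP n) := by
  induction w with
  | nil =>
    intro n
    rw [muFrom_nil, muFrom_nil, Matrix.map_one _ (by simp [shiftP]) (by simp [shiftP])]
  | cons a w ih =>
    intro n
    rw [muFrom_cons, muFrom_cons, matMap_shift, Matrix.map_map, ih (n+1), ih 1,
      Matrix.map_map]
    congr 1
    · ext i j; simp [Function.comp, shiftP_shiftP, shiftP_zero]
    · ext i j; simp [Function.comp, shiftP_shiftP, Nat.add_comm 1 n]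

lemma muWord_append (r c : List S) :
    muWord μ (r ++ c) = muWord μ r * (muWord μ c).map (shiftP r.length) := by
  rw [muWord_eq_muFrom, muWord_eq_muFrom, muWord_eq_muFrom]
  show muFrom μ 0 (r ++ c) = _
  rw [muFrom, List.zipIdx_append, List.map_append, List.prod_append]
  rw [show ((r.zipIdx 0).map (fun p => (μ p.1).map (shiftP p.2))).prod = muFrom μ 0 r from rfl,
    show ((c.zipIdx (0 + r.length)).map (fun p => (μ p.1).map (shiftP p.2))).prod
       = muFrom μ (0 + r.length) c from rfl, Nat.zero_add, muFrom_shift μ c r.length]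

end MuWord





section Key
variable {S ι : Type*} [Fintype ι] [DecidableEq ι]
    (α : ι → ℚ) (μ : S → Matrix ι ι (Polynomial ℚ)) (β : ι → Polynomial ℚ)

lemma backF_eval (t : ℚ) (c : List S) :
    (fun j => (backF μ β c j).eval t) =
      ((muWord μ c).map (Polynomial.eval t)).mulVec
        (fun i => (β i).eval (t + c.length)) := by
  funext j
  simp [backF, Matrix.mulVec, dotProduct, Polynomial.eval_finset_sum, eval_shiftP]

lemma matMap_eval (t : ℚ) (M N : Matrix ι ι (Polynomial ℚ)) :
    (M * N).map (Polynomial.eval t) = M.map (Polynomial.eval t) * N.map (Polynomial.eval t) := by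
  have : ∀ P : Matrix ι ι (Polynomial ℚ),
      P.map (Polynomial.eval t) = P.map (Polynomial.evalRingHom t) := fun P => rfl
  rw [this, this, this, Matrix.map_mul]

lemma fAut_append (r c : List S) :
    fAut α μ β (r ++ c) =
      (Matrix.vecMul α ((muWord μ r).map (Polynomial.eval (1 : ℚ)))) ⬝ᵥ
        (fun j => (backF μ β c j).eval ((r.length : ℚ) + 1)) := by
  rw [backF_eval, fAut, muWord_append, matMap_eval, Matrix.map_map]
  rw [← Matrix.mulVec_mulVec, Matrix.dotProduct_mulVec]
  have h1 : (muWord μ c).map (Polynomial.eval (1:ℚ) ∘ shiftP r.length)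
      = (muWord μ c).map (Polynomial.eval ((r.length : ℚ) + 1)) := by
    ext i j
    simp [Function.comp, eval_shiftP, add_comm (1:ℚ)]
  have h2 : (fun i => (β i).eval (((r ++ c).length : ℚ) + 1))
      = fun i => (β i).eval ((r.length : ℚ) + 1 + (c.length : ℚ)) := by
    funext i
    congr 1
    push_cast [List.length_append]
    ring
  rw [h1, h2]

end Key








/-- If `A(R,C,d)` (built from `f = f_A`) has full row rank and every
`r ∈ R` has length `< s`, then the `s`-bounded forward vectors `f̄ˢ_A(r)`, `r ∈ R`, are
linearly independent over `ℚ`; equivalently their span has dimension `|R|`. -/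
theorem bounded_forward_vectors_linearly_independent
    {S : Type*} [Fintype S] (nA m nc d s : ℕ)
    (α : Fin nA → ℚ) (μ : S → Matrix (Fin nA) (Fin nA) (Polynomial ℚ))
    (β : Fin nA → Polynomial ℚ)
    (R : Fin m → List S) (C : Fin nc → List S)
    (hrank : (tableA (fAut α μ β) R C d).rank = m)
    (hlen : ∀ i : Fin m, (R i).length < s) :
    LinearIndependent ℚ (fun i : Fin m => fwdBounded α μ s (R i)) ∧
    Module.finrank ℚ
        (Submodule.span ℚ (Set.range (fun i : Fin m => fwdBounded α μ s (R i))))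
      = m := by
  classical
  set M := tableA (fAut α μ β) R C d with hMdef
  -- rows of M are linearly independent
  have hM : LinearIndependent ℚ (fun i => M i) := by
    rw [linearIndependent_iff_card_eq_finrank_span, Set.finrank,
      show (Set.range fun i => M i) = Set.range M.row from rfl,
      ← Matrix.rank_eq_finrank_span_row]
    simp [hrank]
  -- the linear map sending forward vectors to rows of M
  set W : Matrix (Fin (s + 1) × Fin nA) (Fin (d + 1) × Fin nc) ℚ :=
    fun q p => (((q.1 : ℕ) : ℚ) + 1) ^ (p.1 : ℕ) *
      (backF μ β (C p.2) q.2).eval (((q.1 : ℕ) : ℚ) + 1) with hWdef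
  have hTW : ∀ i : Fin m, W.vecMulLinear (fwdBounded α μ s (R i)) = M i := by
    intro i
    funext p
    have hk : (R i).length < s + 1 := (hlen i).trans (Nat.lt_succ_self s)
    set k₀ : Fin (s + 1) := ⟨(R i).length, hk⟩ with hk0
    have : W.vecMulLinear (fwdBounded α μ s (R i)) p
        = ∑ q : Fin (s + 1) × Fin nA, fwdBounded α μ s (R i) q * W q p := by
      simp [Matrix.vecMulLinear_apply, Matrix.vecMul, dotProduct]
    rw [this, Fintype.sum_prod_type]
    rw [Finset.sum_eq_single k₀]
    · have hfwd : ∀ j, fwdBounded α μ s (R i) (k₀, j)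
          = Matrix.vecMul α ((muWord μ (R i)).map (Polynomial.eval (1:ℚ))) j := by
        intro j; simp [fwdBounded, hk0]
      have hW : ∀ j, W (k₀, j) p
          = (((R i).length : ℚ) + 1) ^ (p.1 : ℕ) *
            (backF μ β (C p.2) j).eval (((R i).length : ℚ) + 1) := by
        intro j; simp [hWdef, hk0]
      calc (∑ j : Fin nA, fwdBounded α μ s (R i) (k₀, j) * W (k₀, j) p)
          = (((R i).length : ℚ) + 1) ^ (p.1 : ℕ) *
            ((Matrix.vecMul α ((muWord μ (R i)).map (Polynomial.eval (1:ℚ)))) ⬝ᵥ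
              (fun j => (backF μ β (C p.2) j).eval (((R i).length : ℚ) + 1))) := by
            rw [dotProduct, Finset.mul_sum]
            apply Finset.sum_congr rfl
            intro j _
            rw [hfwd j, hW j]
            ring
        _ = M i p := by
            rw [← fAut_append]
            simp [hMdef, tableA]
    · intro k _ hkne
      have : ¬ ((k : ℕ) = (R i).length) := by
        intro h
        exact hkne (Fin.ext h)
      simp [fwdBounded, this]
    · intro h
      exact absurd (Finset.mem_univ k₀) h
  refine ⟨?_, ?_⟩
  · apply LinearIndependent.of_comp W.vecMulLinear
    convert hM using 1
    funext i
    exact hTW i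
  · have hind : LinearIndependent ℚ (fun i : Fin m => fwdBounded α μ s (R i)) := by
      apply LinearIndependent.of_comp W.vecMulLinear
      convert hM using 1
      funext i
      exact hTW i
    rw [finrank_span_eq_card hind, Fintype.card_fin]
end
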